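/- Let G be a compact metrizable topological group acting continuously on the Stone–Čech compactification βℕ of the discrete space ℕ (i.e. the action map G × βℕ → βℕ is jointly continuous). Then every orbit G·x, x ∈ βℕ, is finite; consequently the stabilizer of every point is an open subgroup of G. -/

import Mathlib

open Topology Filter

instance : ExtremallyDisconnected (StoneCech ℕ) :=
  StoneCech.projective.extremallyDisconnected

/-- `βℕ` has no nontrivial convergent sequences. -/
lemma stoneCech_no_nontrivial_convergent_sequence
    (u : ℕ → StoneCech ℕ) (x : StoneCech ℕ)
    (hu : Tendsto u atTop (𝓝 x)) (hne : ∀ n, u n ≠ x) : False := by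
  classical
  -- clopen sets separating x from each u n
  have hsep : ∀ n, ∃ C : Set (StoneCech ℕ), IsClopen C ∧ x ∈ C ∧ u n ∈ Cᶜ :=
    fun n => exists_isClopen_of_totally_separated (hne n).symm
  choose C hC hxC huC using hsep
  -- recursive construction of indices k n and nested clopen sets D n
  let pick : ℕ → Set (StoneCech ℕ) → ℕ := fun j D =>
    if h : ∃ m, j < m ∧ u m ∈ D then h.choose else 0
  let step : ℕ × Set (StoneCech ℕ) → ℕ × Set (StoneCech ℕ) := fun p =>
    (pick p.1 (p.2 ∩ C p.1), p.2 ∩ C p.1)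
  let s : ℕ → ℕ × Set (StoneCech ℕ) := fun n => step^[n] (0, Set.univ)
  let k : ℕ → ℕ := fun n => (s n).1
  let D : ℕ → Set (StoneCech ℕ) := fun n => (s n).2
  have hs : ∀ n, s (n + 1) = step (s n) := fun n =>
    Function.iterate_succ_apply' step n _
  have hD : ∀ n, D (n + 1) = D n ∩ C (k n) := fun n => by
    show (s (n+1)).2 = (s n).2 ∩ C (s n).1
    rw [hs n]
  have hk : ∀ n, k (n + 1) = pick (k n) (D n ∩ C (k n)) := fun n => by
    show (s (n+1)).1 = pick (s n).1 ((s n).2 ∩ C (s n).1)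
    rw [hs n]
  -- invariant
  have stepQ : ∀ n, (IsClopen (D n) ∧ x ∈ D n ∧ u (k n) ∈ D n) →
      k n < k (n + 1) ∧ (IsClopen (D (n+1)) ∧ x ∈ D (n+1) ∧ u (k (n+1)) ∈ D (n+1)) := by
    intro n ⟨hcl, hx, _⟩
    have hclop' : IsClopen (D n ∩ C (k n)) := hcl.inter (hC (k n))
    have hx' : x ∈ D n ∩ C (k n) := ⟨hx, hxC (k n)⟩
    have hex : ∃ m, k n < m ∧ u m ∈ D n ∩ C (k n) :=
      ((eventually_gt_atTop (k n)).and (hu (hclop'.isOpen.mem_nhds hx'))).exists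
    have hkk : k (n + 1) = hex.choose := by
      rw [hk n]; exact dif_pos hex
    refine ⟨?_, ?_, ?_, ?_⟩
    · rw [hkk]; exact hex.choose_spec.1
    · rw [hD n]; exact hclop'
    · rw [hD n]; exact hx'
    · rw [hD n, hkk]; exact hex.choose_spec.2
  have inv : ∀ n, IsClopen (D n) ∧ x ∈ D n ∧ u (k n) ∈ D n := by
    intro n
    induction n with
    | zero => exact ⟨isClopen_univ, Set.mem_univ _, Set.mem_univ _⟩
    | succ m ih => exact (stepQ m ih).2
  have kmono : StrictMono k := strictMono_nat_of_lt_succ fun n => (stepQ n (inv n)).1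
  -- the disjoint clopen pieces
  let V : ℕ → Set (StoneCech ℕ) := fun n => D n \ C (k n)
  have hVopen : ∀ n, IsOpen (V n) := fun n =>
    (inv n).1.isOpen.sdiff (hC (k n)).isClosed
  have huV : ∀ n, u (k n) ∈ V n := fun n => ⟨(inv n).2.2, huC (k n)⟩
  have Dmono : Antitone D := antitone_nat_of_succ_le fun n => by
    rw [hD n]; exact Set.inter_subset_left
  have Vsub : ∀ m n, m < n → V n ⊆ C (k m) := by
    intro m n h y hy
    have : y ∈ D (m + 1) := Dmono h hy.1
    rw [hD m] at this
    exact this.2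
  have Vdisj : ∀ m n, m ≠ n → ∀ y, y ∈ V m → y ∈ V n → False := by
    intro m n hmn y hym hyn
    rcases lt_or_gt_of_ne hmn with h | h
    · exact hym.2 (Vsub m n h hyn)
    · exact hyn.2 (Vsub n m h hym)
  -- the extremally disconnected contradiction
  let U : Set (StoneCech ℕ) := ⋃ n, V (2 * n)
  have hUopen : IsOpen U := isOpen_iUnion fun n => hVopen (2 * n)
  have h2 : StrictMono fun n : ℕ => 2 * n := fun a b h => by dsimp only; omega
  have htend : Tendsto (fun n => u (k (2 * n))) atTop (𝓝 x) :=
    hu.comp ((kmono.comp h2).tendsto_atTop)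
  have hxcl : x ∈ closure U :=
    mem_closure_of_tendsto htend (Eventually.of_forall fun n =>
      Set.mem_iUnion.mpr ⟨n, huV (2 * n)⟩)
  have hclU : IsOpen (closure U) := ExtremallyDisconnected.open_closure U hUopen
  obtain ⟨M, hM⟩ := eventually_atTop.mp
    (hu (hclU.mem_nhds hxcl) : ∀ᶠ m in atTop, u m ∈ closure U)
  have hmem : u (k (2 * M + 1)) ∈ closure U := hM _ (le_trans (by omega) (kmono.le_apply))
  obtain ⟨y, hyV, hyU⟩ :=
    mem_closure_iff.mp hmem (V (2 * M + 1)) (hVopen _) (huV (2 * M + 1))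
  obtain ⟨n, hyn⟩ := Set.mem_iUnion.mp hyU
  exact Vdisj (2 * M + 1) (2 * n) (by omega) y hyV hyn


/-- **Orbits of a compact metrizable group acting on `βℕ` are finite, and stabilizers
are open subgroups.**
Let `G` be a compact metrizable topological group acting continuously on the
Stone–Čech compactification `βℕ` of the discrete space `ℕ`.  Then every orbit
`{A g x : g ∈ G}` is finite, and the stabilizer `{g : A g x = x}` of every point is an
open subgroup of `G`. -/
theorem orbits_finite_stabilizers_open
    {G : Type*} [TopologicalSpace G] [CompactSpace G]
    [TopologicalSpace.MetrizableSpace G] [Group G] [IsTopologicalGroup G]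
    (A : G → StoneCech ℕ → StoneCech ℕ)
    (hA_cont : Continuous fun p : G × StoneCech ℕ => A p.1 p.2)
    (hA_one : ∀ y : StoneCech ℕ, A 1 y = y)
    (hA_mul : ∀ (g h : G) (y : StoneCech ℕ), A (g * h) y = A g (A h y)) :
    ∀ x : StoneCech ℕ,
      (Set.range fun g : G => A g x).Finite ∧
      ∃ H : Subgroup G, (H : Set G) = {g : G | A g x = x} ∧ IsOpen (H : Set G) := by
  intro x
  have hcont1 : Continuous fun g : G => A g x :=
    hA_cont.comp (continuous_id.prodMk continuous_const)
  have hfin : (Set.range fun g : G => A g x).Finite := by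
    by_contra hinf
    have hinf' : (Set.range fun g : G => A g x).Infinite := hinf
    obtain e := hinf'.natEmbedding
    have he : ∀ n, ∃ g : G, A g x = (e n : StoneCech ℕ) := fun n => (e n).2
    choose g hg using he
    obtain ⟨p, φ, hφ, hconv⟩ := CompactSpace.tendsto_subseq g
    set y : ℕ → StoneCech ℕ := fun n => A (g (φ n)) x with hy_def
    have hy : Tendsto y atTop (𝓝 (A p x)) := by
      have h1 : Tendsto (fun n => (g (φ n), x)) atTop (𝓝 (p, x)) :=
        hconv.prodMk_nhds tendsto_const_nhds
      have := (hA_cont.tendsto (p, x)).comp h1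
      simpa [Function.comp_def, hy_def] using this
    have hyinj : Function.Injective y := by
      intro a b hab
      have : (e (φ a) : StoneCech ℕ) = (e (φ b) : StoneCech ℕ) := by
        rw [← hg (φ a), ← hg (φ b)]; exact hab
      exact hφ.injective (e.injective (Subtype.ext this))
    have hNe : ∃ N, ∀ n, N ≤ n → y n ≠ A p x := by
      by_contra h'
      push_neg at h'
      obtain ⟨n1, hn1, hy1⟩ := h' 0
      obtain ⟨n2, hn2, hy2⟩ := h' (n1 + 1)
      exact absurd (hyinj (hy1.trans hy2.symm)) (by omega)
    obtain ⟨N, hN⟩ := hNe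
    exact stoneCech_no_nontrivial_convergent_sequence (fun n => y (n + N)) (A p x)
      (hy.comp (tendsto_add_atTop_nat N)) (fun n => hN (n + N) (by omega))
  refine ⟨hfin, ?_⟩
  refine ⟨{ carrier := {g : G | A g x = x}
            one_mem' := hA_one x
            mul_mem' := by
              intro a b ha hb
              simp only [Set.mem_setOf_eq] at *
              rw [hA_mul, hb, ha]
            inv_mem' := by
              intro a ha
              simp only [Set.mem_setOf_eq] at *
              calc A a⁻¹ x = A a⁻¹ (A a x) := by rw [ha]
                _ = A (a⁻¹ * a) x := (hA_mul _ _ _).symm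
                _ = x := by rw [inv_mul_cancel, hA_one] }, rfl, ?_⟩
  have hclosed : IsClosed ((Set.range fun g : G => A g x) \ {x}) :=
    (hfin.subset Set.diff_subset).isClosed
  have heq : {g : G | A g x = x} =
      (fun g : G => A g x) ⁻¹' ((Set.range fun g : G => A g x) \ {x})ᶜ := by
    ext g
    simp only [Set.mem_setOf_eq, Set.mem_preimage, Set.mem_compl_iff, Set.mem_diff,
      Set.mem_singleton_iff, not_and, not_not]
    exact ⟨fun h _ => h, fun h => h ⟨g, rfl⟩⟩
  show IsOpen {g : G | A g x = x}
  rw [heq]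
  exact hclosed.isOpen_compl.preimage hcont1
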